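/- Let n ≥ 2 and a, b ∈ (ℂ*)^{n−1}, and let M be the n×n 'cross-shaped' matrix with first row (0, a₁, …, a_{n−1}), first column (0, b₁, …, b_{n−1})ᵀ, and zeros elsewhere. For an integer d ≥ 1, the map x ↦ x + (Mx)^d has Jacobian identically 1 if and only if a₁ b₁^d + a₂ b₂^d + ⋯ + a_{n−1} b_{n−1}^d = 0; and in that case the inverse of f = x + (Mx)^d is x = f − (M(f − (Mf)^d))^d. -/

import Mathlib

open Matrix BigOperators

/-- Jacobian determinant of a map `f : ℂ^ι → ℂ^ι` at `x`. -/
noncomputable def jacDet {ι : Type*} [Fintype ι] [DecidableEq ι]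
    (f : (ι → ℂ) → (ι → ℂ)) (x : ι → ℂ) : ℂ :=
  (LinearMap.toMatrix (Pi.basisFun ℂ ι) (Pi.basisFun ℂ ι)
    (fderiv ℂ f x).toLinearMap).det

/-- The map `x ↦ x + φ(Ax)`, with `φ` applied entrywise. -/
noncomputable def phiMap {ι : Type*} [Fintype ι] (A : Matrix ι ι ℂ) (φ : ℂ → ℂ)
    (x : ι → ℂ) : ι → ℂ :=
  fun j => x j + φ (A.mulVec x j)

/-- Domain of definition of `x ↦ x + φ(Ax)` for `φ` defined on `Ω`. -/
def phiDom {ι : Type*} [Fintype ι] (A : Matrix ι ι ℂ) (Ω : Set ℂ) : Set (ι → ℂ) :=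
  {x | ∀ j, A.mulVec x j ∈ Ω}

/-- `(A, φ)` is a good pair: the Jacobian of `x + φ(Ax)` is identically a nonzero constant. -/
def IsGoodPair {ι : Type*} [Fintype ι] [DecidableEq ι]
    (A : Matrix ι ι ℂ) (Ω : Set ℂ) (φ : ℂ → ℂ) : Prop :=
  ∃ c : ℂ, c ≠ 0 ∧ ∀ x ∈ phiDom A Ω, jacDet (phiMap A φ) x = c

/-- A matrix is universal if it forms a good pair with every analytic function. -/
def IsUniversal {ι : Type*} [Fintype ι] [DecidableEq ι] (A : Matrix ι ι ℂ) : Prop :=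
  ∀ (Ω : Set ℂ) (φ : ℂ → ℂ), IsOpen Ω → Ω.Nonempty → IsPreconnected Ω →
    AnalyticOn ℂ φ Ω → (phiDom A Ω).Nonempty → IsGoodPair A Ω φ

/-- The principal minor of `A` indexed by `I`. -/
noncomputable def principalMinor {ι : Type*} [DecidableEq ι] (A : Matrix ι ι ℂ)
    (I : Finset ι) : ℂ :=
  (A.submatrix (fun i : I => (i : ι)) (fun i : I => (i : ι))).det

/-- Determinant of the rank-2 perturbation of the identity arising as the Jacobian matrix. -/
lemma stmt18_det_aux {n : ℕ} (a b : Fin n → ℂ)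
    (M : Matrix (Fin (n + 1)) (Fin (n + 1)) ℂ)
    (hM00 : M 0 0 = 0)
    (hMa : ∀ k : Fin n, M 0 k.succ = a k)
    (hMb : ∀ k : Fin n, M k.succ 0 = b k)
    (hMz : ∀ j k : Fin n, M j.succ k.succ = 0)
    (c : Fin (n+1) → ℂ) :
    (Matrix.of fun i j => (1 : Matrix (Fin (n+1)) (Fin (n+1)) ℂ) i j + c i * M i j).det
      = 1 - ∑ k, (c 0 * a k) * (c k.succ * b k) := by
  set u : Fin (n+1) → ℂ := Pi.single 0 1 with hu
  set w : Fin (n+1) → ℂ := Fin.cons 0 (fun k => c k.succ * b k) with hw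
  set v : Fin (n+1) → ℂ := Fin.cons 0 (fun k => c 0 * a k) with hv
  set U : Matrix (Fin (n+1)) (Fin 2) ℂ := Matrix.of fun i => ![u i, w i] with hU
  set V : Matrix (Fin 2) (Fin (n+1)) ℂ := Matrix.of ![v, u] with hV
  have hmat : (Matrix.of fun i j => (1 : Matrix (Fin (n+1)) (Fin (n+1)) ℂ) i j + c i * M i j)
      = 1 + U * V := by
    ext i j
    simp only [Matrix.of_apply, Matrix.add_apply, Matrix.mul_apply, Fin.sum_univ_two, hU, hV]
    simp only [Matrix.of_apply, Matrix.cons_val_zero, Matrix.cons_val_one, Matrix.head_cons]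
    congr 1
    induction i using Fin.cases with
    | zero =>
      induction j using Fin.cases with
      | zero => simp [hu, hv, hw, hM00]
      | succ k => simp [hu, hv, hw, hMa, Pi.single_apply, (Fin.succ_ne_zero k)]
    | succ i =>
      induction j using Fin.cases with
      | zero => simp [hu, hv, hw, hMb, Pi.single_apply, (Fin.succ_ne_zero i)]
      | succ k => simp [hu, hv, hw, hMz, Pi.single_apply, (Fin.succ_ne_zero i),
          (Fin.succ_ne_zero k)]
  rw [hmat, Matrix.det_one_add_mul_comm, Matrix.det_fin_two]
  have e00 : ((1 + V * U : Matrix (Fin 2) (Fin 2) ℂ)) 0 0 = 1 := by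
    simp only [Matrix.add_apply, Matrix.mul_apply, Matrix.one_apply_eq, hU, hV]
    rw [Fin.sum_univ_succ]
    simp [hu, hv, Pi.single_apply, Fin.succ_ne_zero]
  have e11 : ((1 + V * U : Matrix (Fin 2) (Fin 2) ℂ)) 1 1 = 1 := by
    simp only [Matrix.add_apply, Matrix.mul_apply, Matrix.one_apply_eq, hU, hV]
    rw [Fin.sum_univ_succ]
    simp [hu, hw, Pi.single_apply, Fin.succ_ne_zero]
  have e10 : ((1 + V * U : Matrix (Fin 2) (Fin 2) ℂ)) 1 0 = 1 := by
    simp only [Matrix.add_apply, Matrix.mul_apply, hU, hV]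
    rw [Fin.sum_univ_succ]
    simp [hu, Pi.single_apply, Fin.succ_ne_zero, Matrix.one_apply]
  have e01 : ((1 + V * U : Matrix (Fin 2) (Fin 2) ℂ)) 0 1
      = ∑ k, (c 0 * a k) * (c k.succ * b k) := by
    simp only [Matrix.add_apply, Matrix.mul_apply, hU, hV]
    rw [Fin.sum_univ_succ]
    simp [hv, hw, Matrix.one_apply]
  rw [e00, e11, e10, e01]
  ring

theorem stmt18 (n : ℕ) (hn : 1 ≤ n) (a b : Fin n → ℂ)
    (ha : ∀ k, a k ≠ 0) (hb : ∀ k, b k ≠ 0) (d : ℕ) (hd : 1 ≤ d)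
    (M : Matrix (Fin (n + 1)) (Fin (n + 1)) ℂ)
    (hM00 : M 0 0 = 0)
    (hMa : ∀ k : Fin n, M 0 k.succ = a k)
    (hMb : ∀ k : Fin n, M k.succ 0 = b k)
    (hMz : ∀ j k : Fin n, M j.succ k.succ = 0) :
    ((∀ x : Fin (n + 1) → ℂ, jacDet (fun y j => y j + (M.mulVec y j) ^ d) x = 1) ↔
      ∑ k, a k * b k ^ d = 0) ∧
    (∑ k, a k * b k ^ d = 0 →
      ∀ x : Fin (n + 1) → ℂ, ∀ j,
        (x j + (M.mulVec x j) ^ d) -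
          (M.mulVec (fun i =>
            (x i + (M.mulVec x i) ^ d) -
              (M.mulVec (fun l => x l + (M.mulVec x l) ^ d) i) ^ d) j) ^ d
          = x j) := by
  have hbd : ∀ k : Fin n, b k ^ (d - 1) * b k = b k ^ d := by
    intro k
    rw [← pow_succ]
    congr 1
    omega
  -- mulVec computations
  have hmv0 : ∀ x : Fin (n+1) → ℂ, M.mulVec x 0 = ∑ k, a k * x k.succ := by
    intro x
    rw [Matrix.mulVec, dotProduct, Fin.sum_univ_succ]
    simp only [hM00, zero_mul, zero_add]
    exact Finset.sum_congr rfl fun k _ => by rw [hMa]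
  have hmvs : ∀ (x : Fin (n+1) → ℂ) (k : Fin n), M.mulVec x k.succ = b k * x 0 := by
    intro x k
    rw [Matrix.mulVec, dotProduct, Fin.sum_univ_succ]
    simp [hMb, hMz]
  -- Jacobian formula
  have hjac : ∀ x : Fin (n + 1) → ℂ,
      jacDet (fun y j => y j + (M.mulVec y j) ^ d) x
        = 1 - (d:ℂ)^2 * (M.mulVec x 0)^(d-1) * (x 0)^(d-1) * ∑ k, a k * b k ^ d := by
    intro x
    set c : Fin (n+1) → ℂ := fun j => (d:ℂ) * (M.mulVec x j)^(d-1) with hc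
    set Lclm : Fin (n+1) → ((Fin (n+1) → ℂ) →L[ℂ] ℂ) := fun j =>
      LinearMap.toContinuousLinearMap ((LinearMap.proj j).comp M.mulVecLin) with hLclm
    set T : (Fin (n+1) → ℂ) →L[ℂ] (Fin (n+1) → ℂ) :=
      ContinuousLinearMap.pi (fun j => ContinuousLinearMap.proj j + c j • Lclm j) with hT
    have hF : HasFDerivAt (fun y (j : Fin (n+1)) => y j + (M.mulVec y j) ^ d) T x := by
      apply hasFDerivAt_pi.2
      intro j
      have h1 : HasFDerivAt (fun y : Fin (n+1) → ℂ => y j)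
          (ContinuousLinearMap.proj j : (Fin (n+1) → ℂ) →L[ℂ] ℂ) x := hasFDerivAt_apply j x
      have h2 : HasFDerivAt (fun y : Fin (n+1) → ℂ => M.mulVec y j) (Lclm j) x :=
        (Lclm j).hasFDerivAt
      have h3 := (hasDerivAt_pow d (M.mulVec x j)).comp_hasFDerivAt x h2
      exact h1.add h3
    have hfd : fderiv ℂ (fun y (j : Fin (n+1)) => y j + (M.mulVec y j) ^ d) x = T := hF.fderiv
    rw [jacDet, hfd]
    have hentry : LinearMap.toMatrix (Pi.basisFun ℂ (Fin (n+1))) (Pi.basisFun ℂ (Fin (n+1)))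
        T.toLinearMap
        = Matrix.of fun i j => (1 : Matrix (Fin (n+1)) (Fin (n+1)) ℂ) i j + c i * M i j := by
      ext i j
      rw [LinearMap.toMatrix_apply]
      simp only [Pi.basisFun_apply, Pi.basisFun_repr, ContinuousLinearMap.coe_coe, hT,
        ContinuousLinearMap.pi_apply, ContinuousLinearMap.add_apply,
        ContinuousLinearMap.proj_apply, ContinuousLinearMap.smul_apply, hLclm,
        LinearMap.coe_toContinuousLinearMap', LinearMap.coe_comp, Function.comp_apply,
        Matrix.mulVecLin_apply, LinearMap.proj_apply, Matrix.mulVec_single,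
        Matrix.of_apply, Matrix.one_apply, Pi.single_apply, smul_eq_mul, mul_one,
          MulOpposite.op_one, one_smul, Matrix.col_apply]
    rw [hentry, stmt18_det_aux a b M hM00 hMa hMb hMz c]
    congr 1
    have : ∀ k : Fin n, (c 0 * a k) * (c k.succ * b k)
        = ((d:ℂ)^2 * (M.mulVec x 0)^(d-1) * (x 0)^(d-1)) * (a k * b k ^ d) := by
      intro k
      rw [hc]
      simp only
      rw [hmvs x k, mul_pow, ← hbd k]
      ring
    rw [Finset.sum_congr rfl fun k _ => this k, ← Finset.mul_sum]
  constructor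
  · constructor
    · -- jacDet ≡ 1 → sum = 0
      intro h
      set k0 : Fin n := ⟨0, hn⟩ with hk0
      set x0 : Fin (n+1) → ℂ := Fin.cons 1 (Pi.single k0 (a k0)⁻¹) with hx0
      have hx00 : x0 0 = 1 := rfl
      have hmx0 : M.mulVec x0 0 = 1 := by
        rw [hmv0]
        have : ∀ k : Fin n, a k * x0 k.succ = if k = k0 then 1 else 0 := by
          intro k
          rw [hx0]
          simp only [Fin.cons_succ, Pi.single_apply]
          by_cases hk : k = k0
          · simp [hk, mul_inv_cancel₀ (ha k0)]
          · simp [hk]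
        rw [Finset.sum_congr rfl fun k _ => this k]
        simp
      have := h x0
      rw [hjac x0, hmx0, hx00] at this
      simp only [one_pow, mul_one] at this
      have h2 : ((d:ℂ))^2 * ∑ k, a k * b k ^ d = 0 := by linear_combination -this
      have hd0 : ((d:ℂ))^2 ≠ 0 := by
        apply pow_ne_zero
        exact Nat.cast_ne_zero.mpr (by omega)
      exact (mul_eq_zero.mp h2).resolve_left hd0
    · -- sum = 0 → jacDet ≡ 1
      intro hS x
      rw [hjac x, hS]
      ring
  · -- inverse formula
    intro hS x j
    set F : Fin (n+1) → ℂ := fun l => x l + (M.mulVec x l) ^ d with hF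
    have hMF0 : M.mulVec F 0 = M.mulVec x 0 := by
      rw [hmv0 F, hmv0 x]
      have : ∀ k : Fin n, a k * F k.succ
          = a k * x k.succ + (a k * b k ^ d) * (x 0) ^ d := by
        intro k
        rw [hF]
        simp only
        rw [hmvs x k, mul_pow]
        ring
      rw [Finset.sum_congr rfl fun k _ => this k, Finset.sum_add_distrib, ← Finset.sum_mul,
        hS, zero_mul, add_zero]
    set G : Fin (n+1) → ℂ := fun i => F i - (M.mulVec F i) ^ d with hG
    have hG0 : G 0 = x 0 := by
      show F 0 - (M.mulVec F 0) ^ d = x 0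
      rw [hMF0]
      show x 0 + (M.mulVec x 0) ^ d - (M.mulVec x 0) ^ d = x 0
      ring
    have hMG : ∀ i : Fin (n+1), M.mulVec G i = M.mulVec x i := by
      intro i
      induction i using Fin.cases with
      | zero =>
        rw [hmv0 G, hmv0 x]
        have : ∀ k : Fin n, a k * G k.succ
            = a k * x k.succ + (a k * b k ^ d) * (x 0) ^ d
              - (a k * b k ^ d) * (F 0) ^ d := by
          intro k
          rw [hG]
          simp only
          rw [hmvs F k, hF]
          simp only
          rw [hmvs x k, mul_pow, mul_pow]
          ring
        rw [Finset.sum_congr rfl fun k _ => this k, Finset.sum_sub_distrib,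
          Finset.sum_add_distrib, ← Finset.sum_mul, ← Finset.sum_mul, hS, zero_mul, zero_mul,
          add_zero, sub_zero]
      | succ k =>
        rw [hmvs G k, hmvs x k, hG0]
    show F j - (M.mulVec G j) ^ d = x j
    rw [hMG j]
    show x j + (M.mulVec x j) ^ d - (M.mulVec x j) ^ d = x j
    ring
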